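/- (Zlotnik's lemma) Let y, h ∈ W^{1,1}(0,T) and g ∈ C(ℝ) satisfy y'(t) = g(y(t)) + h'(t) a.e. on [0,T] with y(0) = y₀. Suppose g(ζ) → −∞ as ζ → ∞ and there exist N₀ ≥ 0, N₁ ≥ 0 with h(t₂) − h(t₁) ≤ N₀ + N₁(t₂ − t₁) for all 0 ≤ t₁ < t₂ ≤ T. If ζ̄ is a constant such that g(ζ) ≤ −N₁ for all ζ ≥ ζ̄, then y(t) ≤ max{y₀, ζ̄} + N₀ for all t ∈ [0,T]. -/
import Mathlib


open MeasureTheory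

/-- Zlotnik's lemma: if y' = g(y) + h' a.e. (in the W^{1,1} / integral sense),
g(ζ) → −∞ as ζ → ∞, h has increments bounded by N₀ + N₁(t₂−t₁), and
g(ζ) ≤ −N₁ for ζ ≥ ζ̄, then y(t) ≤ max{y₀, ζ̄} + N₀ on [0,T]. -/
theorem stmt4 (T : ℝ) (hT : 0 < T) (g : ℝ → ℝ) (y h h' : ℝ → ℝ)
    (y0 N0 N1 zbar : ℝ)
    (hg : Continuous g)
    (hgtop : Filter.Tendsto g Filter.atTop Filter.atBot)
    (hN0 : 0 ≤ N0) (hN1 : 0 ≤ N1)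
    (hy0 : y 0 = y0)
    (hyint : IntervalIntegrable (fun s => g (y s) + h' s) volume 0 T)
    (hyFTC : ∀ t ∈ Set.Icc (0 : ℝ) T, y t = y 0 + ∫ s in (0 : ℝ)..t, (g (y s) + h' s))
    (hh'int : IntervalIntegrable h' volume 0 T)
    (hhFTC : ∀ t ∈ Set.Icc (0 : ℝ) T, h t = h 0 + ∫ s in (0 : ℝ)..t, h' s)
    (hinc : ∀ t1 t2 : ℝ, 0 ≤ t1 → t1 < t2 → t2 ≤ T → h t2 - h t1 ≤ N0 + N1 * (t2 - t1))
    (hzbar : ∀ ζ : ℝ, zbar ≤ ζ → g ζ ≤ -N1) :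
    ∀ t ∈ Set.Icc (0 : ℝ) T, y t ≤ max y0 zbar + N0 := by
  have hTle : (0:ℝ) ≤ T := hT.le
  set M := max y0 zbar with hMdef
  -- subinterval integrability
  have hsub : ∀ a b : ℝ, a ∈ Set.Icc (0:ℝ) T → b ∈ Set.Icc (0:ℝ) T →
      Set.uIcc a b ⊆ Set.uIcc (0:ℝ) T := by
    intro a b ha hb
    rw [Set.uIcc_of_le hTle]
    exact Set.uIcc_subset_Icc ha hb
  -- continuity of y on [0,T]
  have hycont : ContinuousOn y (Set.Icc 0 T) := by
    have hprim : ContinuousOn (fun x => y 0 + ∫ s in (0:ℝ)..x, (g (y s) + h' s))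
        (Set.Icc 0 T) := by
      have := intervalIntegral.continuousOn_primitive_interval'
        (a := (0:ℝ)) hyint (by simp [Set.uIcc_of_le hTle, hTle])
      rw [Set.uIcc_of_le hTle] at this
      exact continuousOn_const.add this
    exact hprim.congr hyFTC
  intro t ht
  by_contra hcon
  push_neg at hcon
  have hyt : M + N0 < y t := hcon
  have hy0M : y 0 ≤ M := by rw [hy0]; exact le_max_left _ _
  -- the set where y ≤ M, within [0, t]
  set S : Set ℝ := {s | s ∈ Set.Icc (0:ℝ) t ∧ y s ≤ M} with hSdef
  have hS0 : (0:ℝ) ∈ S := ⟨⟨le_refl _, ht.1⟩, hy0M⟩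
  have hSne : S.Nonempty := ⟨0, hS0⟩
  have hSbdd : BddAbove S := ⟨t, fun s hs => hs.1.2⟩
  have hSclosed : IsClosed S := by
    have : S = Set.Icc 0 t ∩ y ⁻¹' Set.Iic M := by
      ext s; simp [hSdef, Set.mem_Icc, and_assoc]
    rw [this]
    exact ContinuousOn.preimage_isClosed_of_isClosed
      (hycont.mono (Set.Icc_subset_Icc_right ht.2)) isClosed_Icc isClosed_Iic
  set σ := sSup S with hσdef
  have hσS : σ ∈ S := hSclosed.csSup_mem hSne hSbdd
  have hσIcc : σ ∈ Set.Icc (0:ℝ) t := hσS.1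
  have hσT : σ ∈ Set.Icc (0:ℝ) T := ⟨hσIcc.1, le_trans hσIcc.2 ht.2⟩
  have hσlt : σ < t := by
    rcases lt_or_eq_of_le hσIcc.2 with h1 | h1
    · exact h1
    · exfalso
      have := hσS.2
      rw [h1] at this
      linarith [le_max_right y0 zbar, hN0]
  -- on (σ, t], y > M
  have hIoc : ∀ s ∈ Set.Ioc σ t, M < y s := by
    intro s hs
    by_contra hle
    push_neg at hle
    have : s ∈ S := ⟨⟨le_trans hσIcc.1 hs.1.le, hs.2⟩, hle⟩
    exact absurd (le_csSup hSbdd this) (not_le.mpr hs.1)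
  -- integrability pieces on [σ, t]
  have hgyintT : IntervalIntegrable (fun s => g (y s)) volume 0 T := by
    have := hyint.sub hh'int
    simpa using this
  have htT : t ∈ Set.Icc (0:ℝ) T := ht
  have hgyint : IntervalIntegrable (fun s => g (y s)) volume σ t :=
    hgyintT.mono_set (hsub σ t hσT htT)
  have hh'int2 : IntervalIntegrable h' volume σ t :=
    hh'int.mono_set (hsub σ t hσT htT)
  have hfint : IntervalIntegrable (fun s => g (y s) + h' s) volume σ t :=
    hyint.mono_set (hsub σ t hσT htT)
  -- FTC differences
  have hydiff : y t - y σ = ∫ s in σ..t, (g (y s) + h' s) := by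
    rw [hyFTC t htT, hyFTC σ hσT]
    rw [add_sub_add_left_eq_sub]
    exact intervalIntegral.integral_interval_sub_left
      (hyint.mono_set (hsub 0 t ⟨le_refl 0, hTle⟩ htT))
      (hyint.mono_set (hsub 0 σ ⟨le_refl 0, hTle⟩ hσT))
  have hhdiff : h t - h σ = ∫ s in σ..t, h' s := by
    rw [hhFTC t htT, hhFTC σ hσT]
    rw [add_sub_add_left_eq_sub]
    exact intervalIntegral.integral_interval_sub_left
      (hh'int.mono_set (hsub 0 t ⟨le_refl 0, hTle⟩ htT))
      (hh'int.mono_set (hsub 0 σ ⟨le_refl 0, hTle⟩ hσT))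
  -- bound on ∫ g(y)
  have hgybound : (∫ s in σ..t, g (y s)) ≤ ∫ _ in σ..t, (-N1) := by
    apply intervalIntegral.integral_mono_ae_restrict hσlt.le hgyint
      intervalIntegrable_const
    rw [Measure.restrict_congr_set Ioc_ae_eq_Icc.symm]
    refine (ae_restrict_iff' measurableSet_Ioc).2 (Filter.Eventually.of_forall ?_)
    intro s hs
    exact hzbar _ (le_trans (le_max_right y0 zbar) (hIoc s hs).le)
  have hb2 : (∫ s in σ..t, g (y s)) ≤ -N1 * (t - σ) := by
    calc (∫ s in σ..t, g (y s)) ≤ ∫ _ in σ..t, (-N1) := hgybound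
    _ = -N1 * (t - σ) := by rw [intervalIntegral.integral_const, smul_eq_mul]; ring
  have hhb : h t - h σ ≤ N0 + N1 * (t - σ) :=
    hinc σ t hσIcc.1 hσlt (le_trans ht.2 (le_refl T))
  have hsplit : (∫ s in σ..t, (g (y s) + h' s)) =
      (∫ s in σ..t, g (y s)) + ∫ s in σ..t, h' s :=
    intervalIntegral.integral_add hgyint hh'int2
  have : y t ≤ y σ + N0 := by
    have h1 : y t = y σ + ((∫ s in σ..t, g (y s)) + ∫ s in σ..t, h' s) := by
      rw [← hsplit, ← hydiff]; ring
    rw [h1, ← hhdiff]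
    nlinarith [hσS.2]
  linarith [hσS.2]
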